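/- Achievability–clearing equivalence (essence of Theorem 2): Let Λ₁ ⊆ ℝ≥0^N be downward closed and nonempty, T a positive integer, L > 0, and μ ∈ ℝ≥0^N. Then μ ∈ Λ_T = { (1/T)∑_{t=1}^T μ_t : μ_t ∈ Λ₁ } if and only if there exist vectors r_1,…,r_T ∈ Λ₁ such that the queue Q₀ = TμL is cleared by the services r_t L under the dynamics Q_t = (Q_{t-1} − r_t L)⁺, i.e., Q_T = 0. -/

import Mathlib

open Finset

private lemma max_sub_max (x c : ℝ) (hc : 0 ≤ c) :
    max (max x 0 - c) 0 = max (x - c) 0 := by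
  rcases le_total x 0 with h | h
  · rw [max_eq_right h, max_eq_right (by linarith), max_eq_right (by linarith)]
  · rw [max_eq_left h]

private lemma queue_closed (L : ℝ) (r : ℕ → ℝ) (a : ℝ) (ha : 0 ≤ a)
    (Q : ℕ → ℝ) (h0 : Q 0 = a) (hrec : ∀ t, Q (t + 1) = max (Q t - L * r t) 0) :
    ∀ t, (∀ s, s < t → 0 ≤ L * r s) → Q t = max (a - ∑ s ∈ range t, L * r s) 0 := by
  intro t
  induction t with
  | zero => intro _; simpa [h0] using (max_eq_left ha).symm
  | succ t ih =>
    intro hr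
    rw [hrec, ih (fun s hs => hr s (hs.trans (Nat.lt_succ_self t))),
      max_sub_max _ _ (hr t (Nat.lt_succ_self t)), sum_range_succ]
    congr 1
    ring

private lemma split_sum (c : ℝ) (hc : 0 ≤ c) (r : ℕ → ℝ) :
    ∀ t, (∀ s, s < t → 0 ≤ r s) →
      ∑ s ∈ range t, min (r s) (max (c - ∑ u ∈ range s, r u) 0)
        = min (∑ s ∈ range t, r s) c := by
  intro t
  induction t with
  | zero => intro _; simp [min_eq_left hc]
  | succ t ih =>
    intro hr
    have hrt : 0 ≤ r t := hr t (Nat.lt_succ_self t)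
    rw [sum_range_succ, ih (fun s hs => hr s (hs.trans (Nat.lt_succ_self t))),
      sum_range_succ]
    rcases le_total c (∑ u ∈ range t, r u) with h | h
    · rw [max_eq_right (by linarith), min_eq_right h, min_eq_right hrt,
        min_eq_right (by linarith : c ≤ ∑ u ∈ range t, r u + r t)]
      ring
    · rw [max_eq_left (by linarith), min_eq_left h]
      rcases le_total (r t) (c - ∑ u ∈ range t, r u) with h2 | h2
      · rw [min_eq_left h2, min_eq_left (by linarith)]
      · rw [min_eq_right h2, min_eq_right (by linarith)]
        ring

theorem stmt_18 (N T : ℕ) (hN : 0 < N) (hT : 0 < T) (L : ℝ) (hL : 0 < L)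
    (Λ₁ : Set (Fin N → ℝ)) (hne : Λ₁.Nonempty)
    (hsub : ∀ x ∈ Λ₁, 0 ≤ x)
    (hdc : ∀ x ∈ Λ₁, ∀ y : Fin N → ℝ, 0 ≤ y → y ≤ x → y ∈ Λ₁)
    (μ : Fin N → ℝ) (hμ : 0 ≤ μ) :
    (μ ∈ {x : Fin N → ℝ | ∃ ν : Fin T → (Fin N → ℝ),
        (∀ t, ν t ∈ Λ₁) ∧ x = (1 / (T : ℝ)) • ∑ t, ν t}) ↔
    ∃ r : ℕ → Fin N → ℝ, (∀ t, t < T → r t ∈ Λ₁) ∧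
      ∃ Q : ℕ → Fin N → ℝ, Q 0 = ((T : ℝ) * L) • μ ∧
        (∀ t, Q (t + 1) = fun n => max (Q t n - L * r t n) 0) ∧
        Q T = 0 := by
  have hT' : (T : ℝ) ≠ 0 := Nat.cast_ne_zero.mpr hT.ne'
  constructor
  · rintro ⟨ν, hν, hμeq⟩
    obtain ⟨z, hz⟩ := hne
    set r : ℕ → Fin N → ℝ := fun t => if h : t < T then ν ⟨t, h⟩ else z with hrdef
    have hrmem : ∀ t, r t ∈ Λ₁ := by
      intro t
      by_cases h : t < T <;> simp [hrdef, h, hν, hz]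
    refine ⟨r, fun t _ => hrmem t, ?_⟩
    refine ⟨fun t => Nat.rec (((T : ℝ) * L) • μ)
      (fun s Qs => fun n => max (Qs n - L * r s n) 0) t, rfl, fun t => rfl, ?_⟩
    funext n
    set Qn : ℕ → ℝ := fun t => (Nat.rec (((T : ℝ) * L) • μ)
      (fun s Qs => fun n => max (Qs n - L * r s n) 0) t : Fin N → ℝ) n with hQn
    have h0 : Qn 0 = ((T : ℝ) * L) * μ n := rfl
    have hrec : ∀ t, Qn (t + 1) = max (Qn t - L * r t n) 0 := fun t => rfl
    have ha : 0 ≤ ((T : ℝ) * L) * μ n :=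
      mul_nonneg (mul_nonneg (Nat.cast_nonneg T) hL.le) (hμ n)
    have hcl := queue_closed L (fun s => r s n) _ ha Qn h0 hrec T
      (fun s _ => mul_nonneg hL.le (hsub _ (hrmem s) n))
    have hsum : ∑ s ∈ range T, r s n = ∑ t : Fin T, ν t n := by
      rw [← Fin.sum_univ_eq_sum_range (fun s => r s n) T]
      exact Finset.sum_congr rfl fun i _ => by simp [hrdef, i.isLt]
    have hμn : (T : ℝ) * μ n = ∑ t : Fin T, ν t n := by
      have := congrFun hμeq n
      simp only [Pi.smul_apply, smul_eq_mul, Finset.sum_apply] at this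
      field_simp at this
      linarith [this]
    show Qn T = 0
    rw [hcl, ← Finset.mul_sum, hsum, ← hμn]
    have hz0 : ((T : ℝ) * L) * μ n - L * ((T : ℝ) * μ n) = 0 := by ring
    rw [hz0]
    simp
  · rintro ⟨r, hrΛ, Q, hQ0, hrec, hQT⟩
    have hrn : ∀ t, t < T → ∀ n, 0 ≤ r t n := fun t ht n => hsub _ (hrΛ t ht) n
    have key : ∀ n, (T : ℝ) * μ n ≤ ∑ s ∈ range T, r s n := by
      intro n
      have ha : 0 ≤ ((T : ℝ) * L) * μ n :=
        mul_nonneg (mul_nonneg (Nat.cast_nonneg T) hL.le) (hμ n)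
      have h0 : Q 0 n = ((T : ℝ) * L) * μ n := by
        rw [hQ0]; simp [mul_comm]
      have hrec' : ∀ t, Q (t + 1) n = max (Q t n - L * r t n) 0 :=
        fun t => congrFun (hrec t) n
      have hcl := queue_closed L (fun s => r s n) _ ha (fun t => Q t n) h0 hrec' T
        (fun s hs => mul_nonneg hL.le (hrn s hs n))
      have hQTn : Q T n = 0 := congrFun hQT n
      simp only [hQTn] at hcl
      have hle : ((T : ℝ) * L) * μ n - ∑ s ∈ range T, L * r s n ≤ 0 := by
        by_contra h
        push_neg at h
        rw [max_eq_left h.le] at hcl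
        linarith
      rw [← Finset.mul_sum] at hle
      have := (mul_le_mul_iff_right₀ hL).mp (by linarith : L * ((T : ℝ) * μ n) ≤ L * ∑ s ∈ range T, r s n)
      exact this
    set ν : Fin T → Fin N → ℝ := fun t n =>
      min (r t n) (max ((T : ℝ) * μ n - ∑ u ∈ range t, r u n) 0) with hνdef
    refine ⟨ν, ?_, ?_⟩
    · intro t
      refine hdc (r t) (hrΛ t t.isLt) (ν t) ?_ ?_
      · intro n
        exact le_min (hrn t t.isLt n) (le_max_right _ 0)
      · intro n
        exact min_le_left _ _
    · funext n
      have hsum : ∑ t : Fin T, ν t n =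
          ∑ s ∈ range T, min (r s n) (max ((T : ℝ) * μ n - ∑ u ∈ range s, r u n) 0) :=
        Fin.sum_univ_eq_sum_range
          (fun s => min (r s n) (max ((T : ℝ) * μ n - ∑ u ∈ range s, r u n) 0)) T
      have hμn : 0 ≤ (T : ℝ) * μ n := mul_nonneg (Nat.cast_nonneg T) (hμ n)
      have hs := split_sum ((T : ℝ) * μ n) hμn (fun s => r s n) T (fun s hs => hrn s hs n)
      simp only [Pi.smul_apply, smul_eq_mul, Finset.sum_apply]
      rw [hsum, hs, min_eq_right (key n)]
      field_simp
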